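/- For all t with t⁴ + 1 ≠ 0, setting x = t(t² + 1)/(t⁴ + 1) and y = t(t² − 1)/(t⁴ + 1) (taking the appropriate sign), one has x⁴ + 2x²y² − x² + y⁴ + y² = 0; equivalently, −2x² + √(8x² + 1) − 1 = 2y² is a perfect square of a rational function in t. -/
import Mathlib


theorem lemniscate_param (t : ℝ) (ht : t^4 + 1 ≠ 0) :
    let x := t*(t^2 + 1)/(t^4 + 1)
    let y := t*(t^2 - 1)/(t^4 + 1)
    x^4 + 2*x^2*y^2 - x^2 + y^4 + y^2 = 0 ∧
    -2*x^2 + Real.sqrt (8*x^2 + 1) - 1 = 2*y^2 := by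
  intro x y
  have hx : x = t*(t^2 + 1)/(t^4 + 1) := rfl
  have hy : y = t*(t^2 - 1)/(t^4 + 1) := rfl
  have h1 : (0:ℝ) < t^4 + 1 := by positivity
  have hs : Real.sqrt (8*x^2 + 1) = (t^4 + 4*t^2 + 1)/(t^4 + 1) := by
    rw [show 8*x^2 + 1 = ((t^4 + 4*t^2 + 1)/(t^4 + 1))^2 by rw [hx]; field_simp; ring]
    exact Real.sqrt_sq (by positivity)
  constructor
  · rw [hx, hy]; field_simp; ring
  · rw [hs, hx, hy]; field_simp; ring
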